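/- The tropical polynomial of a product of two nonzero polynomials is the sum of their tropical polynomials: (F₁F₂)[r] = F₁[r] + F₂[r] for all r ∈ ℝⁿ. -/

import Mathlib

/-- The tropical polynomial of a nonzero polynomial: `F[r] = max {⟨v, r⟩ : c_v ≠ 0}`. -/
noncomputable def trop {n : ℕ} (F : MvPolynomial (Fin n) ℤ) (r : Fin n → ℝ) : ℝ :=
  sSup ((fun d : Fin n →₀ ℕ => ∑ i, (d i : ℝ) * r i) '' (F.support : Set (Fin n →₀ ℕ)))

section aux

variable {n : ℕ} (r : Fin n → ℝ)

private noncomputable def w (r : Fin n → ℝ) (d : Fin n →₀ ℕ) : ℝ := ∑ i, (d i : ℝ) * r i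

private lemma w_add (a b : Fin n →₀ ℕ) : w r (a + b) = w r a + w r b := by
  simp only [w, Finsupp.add_apply]
  rw [← Finset.sum_add_distrib]
  congr 1; ext i; push_cast; ring

private lemma trop_eq_sup' (F : MvPolynomial (Fin n) ℤ) (h : F ≠ 0) :
    trop F r = F.support.sup' (by
      simpa [Finset.nonempty_iff_ne_empty, MvPolynomial.support_eq_empty] using h) (w r) := by
  rw [Finset.sup'_eq_csSup_image]
  rfl

private lemma lex_cancel {a a' b b' : Fin n →₀ ℕ} (ha : toLex a ≤ toLex a')
    (hb : toLex b ≤ toLex b') (h : a + b = a' + b') : a = a' ∧ b = b' := by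
  rcases ha.lt_or_eq with ha' | ha'
  · exfalso
    have : toLex (a + b) < toLex (a' + b') := by
      have := add_lt_add_of_lt_of_le (a := toLex a) (b := toLex a') (c := toLex b)
        (d := toLex b') ha' hb
      exact this
    rw [h] at this
    exact lt_irrefl _ this
  · have hae : a = a' := congrArg ofLex ha'
    subst hae
    exact ⟨rfl, add_left_cancel h⟩

end aux

/-- Tropical polynomial of a product of two nonzero polynomials is the sum of their
tropical polynomials. -/
theorem trop_mul {n : ℕ} (F₁ F₂ : MvPolynomial (Fin n) ℤ) (h₁ : F₁ ≠ 0) (h₂ : F₂ ≠ 0)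
    (r : Fin n → ℝ) :
    trop (F₁ * F₂) r = trop F₁ r + trop F₂ r := by
  classical
  have h₁₂ : F₁ * F₂ ≠ 0 := mul_ne_zero h₁ h₂
  have hne₁ : F₁.support.Nonempty := by
    simpa [Finset.nonempty_iff_ne_empty, MvPolynomial.support_eq_empty] using h₁
  have hne₂ : F₂.support.Nonempty := by
    simpa [Finset.nonempty_iff_ne_empty, MvPolynomial.support_eq_empty] using h₂
  have hne₁₂ : (F₁ * F₂).support.Nonempty := by
    simpa [Finset.nonempty_iff_ne_empty, MvPolynomial.support_eq_empty] using h₁₂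
  rw [trop_eq_sup' r _ h₁₂, trop_eq_sup' r _ h₁, trop_eq_sup' r _ h₂]
  set M₁ := F₁.support.sup' hne₁ (w r) with hM₁
  set M₂ := F₂.support.sup' hne₂ (w r) with hM₂
  apply le_antisymm
  · apply Finset.sup'_le
    intro d hd
    have hd' := MvPolynomial.support_mul F₁ F₂ hd
    rw [Finset.mem_add] at hd'
    obtain ⟨a, ha, b, hb, rfl⟩ := hd'
    rw [w_add]
    exact add_le_add (Finset.le_sup' _ ha) (Finset.le_sup' _ hb)
  · -- pick lex-maximal maximizers
    have hS₁ : (F₁.support.filter (fun d => w r d = M₁)).Nonempty := by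
      obtain ⟨a, ha, hav⟩ := Finset.exists_mem_eq_sup' hne₁ (w r)
      exact ⟨a, Finset.mem_filter.mpr ⟨ha, hav.symm⟩⟩
    have hS₂ : (F₂.support.filter (fun d => w r d = M₂)).Nonempty := by
      obtain ⟨a, ha, hav⟩ := Finset.exists_mem_eq_sup' hne₂ (w r)
      exact ⟨a, Finset.mem_filter.mpr ⟨ha, hav.symm⟩⟩
    obtain ⟨a, ha, hamax⟩ :=
      Finset.exists_max_image (F₁.support.filter (fun d => w r d = M₁)) toLex hS₁
    obtain ⟨b, hb, hbmax⟩ :=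
      Finset.exists_max_image (F₂.support.filter (fun d => w r d = M₂)) toLex hS₂
    rw [Finset.mem_filter] at ha hb
    -- coefficient of a + b in the product is nonzero
    have hcoeff : MvPolynomial.coeff (a + b) (F₁ * F₂) =
        MvPolynomial.coeff a F₁ * MvPolynomial.coeff b F₂ := by
      rw [MvPolynomial.coeff_mul]
      apply Finset.sum_eq_single_of_mem (a, b)
      · rw [Finset.HasAntidiagonal.mem_antidiagonal]
      · rintro ⟨x, y⟩ hxy hne
        rw [Finset.HasAntidiagonal.mem_antidiagonal] at hxy
        by_contra hc
        have hx : x ∈ F₁.support := by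
          rw [MvPolynomial.mem_support_iff]; intro h0; apply hc; rw [h0, zero_mul]
        have hy : y ∈ F₂.support := by
          rw [MvPolynomial.mem_support_iff]; intro h0; apply hc; rw [h0, mul_zero]
        have hwx : w r x ≤ M₁ := Finset.le_sup' _ hx
        have hwy : w r y ≤ M₂ := Finset.le_sup' _ hy
        have hsum : w r x + w r y = M₁ + M₂ := by
          rw [← w_add, hxy, w_add, ha.2, hb.2]
        have hwx' : w r x = M₁ := by linarith
        have hwy' : w r y = M₂ := by linarith
        have hxa : toLex x ≤ toLex a :=
          hamax x (Finset.mem_filter.mpr ⟨hx, hwx'⟩)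
        have hyb : toLex y ≤ toLex b :=
          hbmax y (Finset.mem_filter.mpr ⟨hy, hwy'⟩)
        obtain ⟨hxeq, hyeq⟩ := lex_cancel hxa hyb hxy
        exact hne (by rw [hxeq, hyeq])
    have hmem : a + b ∈ (F₁ * F₂).support := by
      rw [MvPolynomial.mem_support_iff, hcoeff]
      exact mul_ne_zero (MvPolynomial.mem_support_iff.mp ha.1)
        (MvPolynomial.mem_support_iff.mp hb.1)
    calc M₁ + M₂ = w r (a + b) := by rw [w_add, ha.2, hb.2]
      _ ≤ _ := Finset.le_sup' _ hmem
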